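/- arXiv:1402.7313 — 5 statements merged into one kernel-verified Lean document; each statement's English description precedes it below -/
import Mathlib

section
/- Let 0<λ<1, d≥2, let A:ℝ→ℝ be Lipschitz and 1-periodic, and let b be the λ-calibrated subaction for A. Suppose z∈[0,1] is a periodic point of T of period k (T^k(z)=z) such that the calibration equality holds along its orbit: b(T(T^j z)) = λ b(T^j z) + A(T^j z) for every j≥0. Then the realizer can be taken periodic: there exists a∈Σ with σ^k(a)=a such that, setting x_0=z and x_{j+1}=τ_{a_j}(x_j), every x_j belongs to the orbit {z,T(z),…,T^{k−1}(z)}, b(x_j)=λ b(x_{j+1})+A(x_{j+1}) for all j≥0, and consequently b(z)=S(z,a). -/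
open Set

noncomputable section

/-- Inverse branch `τ_i(x) = (x+i)/d` of `T(x) = dx (mod 1)`. -/
def tau (d i : ℕ) (x : ℝ) : ℝ := (x + i) / d

/-- Iterated inverse branches: `tpath d a x k = (τ_{a_k} ∘ ⋯ ∘ τ_{a_0})(x)`. -/
def tpath (d : ℕ) (a : ℕ → ℕ) (x : ℝ) : ℕ → ℝ
  | 0 => tau d (a 0) x
  | k + 1 => tau d (a (k + 1)) (tpath d a x k)

/-- `S(x,a) = Σ_{k≥0} λ^k A(τ_{k,a} x)`. -/
def Sfun (lam : ℝ) (d : ℕ) (A : ℝ → ℝ) (x : ℝ) (a : ℕ → ℕ) : ℝ :=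
  ∑' k : ℕ, lam ^ k * A (tpath d a x k)

/-- The left shift `σ` on sequences. -/
def shift (a : ℕ → ℕ) : ℕ → ℕ := fun n => a (n + 1)

/-- Strict lexicographic order on sequences. -/
def lexLt (a b : ℕ → ℕ) : Prop := ∃ n, (∀ i < n, a i = b i) ∧ a n < b n

/-- `T(x) = dx (mod 1)`. -/
def Tmap (d : ℕ) (x : ℝ) : ℝ := Int.fract (d * x)

/-- A λ-calibrated subaction for `A`: continuous on `[0,1]`, `b 0 = b 1`, and
`b(x) = max_{i<d} (λ b(τ_i x) + A(τ_i x))` for all `x ∈ [0,1]`. -/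
def IsCalibrated (lam : ℝ) (d : ℕ) (A b : ℝ → ℝ) : Prop :=
  ContinuousOn b (Icc 0 1) ∧ b 0 = b 1 ∧
    ∀ x ∈ Icc (0:ℝ) 1,
      IsGreatest {y : ℝ | ∃ i < d, y = lam * b (tau d i x) + A (tau d i x)} (b x)

/-- The twist condition: for `a < b` lexicographically and `x ∈ (0,1)`,
`∂S/∂x(x,a) − ∂S/∂x(x,b) > 0`. -/
def Twist (lam : ℝ) (d : ℕ) (A : ℝ → ℝ) : Prop :=
  ∀ a b : ℕ → ℕ, (∀ k, a k < d) → (∀ k, b k < d) → lexLt a b →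
    ∀ x ∈ Ioo (0:ℝ) 1,
      0 < deriv (fun y => Sfun lam d A y a) x - deriv (fun y => Sfun lam d A y b) x

/-- `Z(a) = Σ_k (λ/2)^k a_k`. -/
def Zfun (lam : ℝ) (a : ℕ → ℕ) : ℝ := ∑' k : ℕ, (lam / 2) ^ k * a k

/-- `ψ_k(a) = Σ_{j=0}^{k} a_j 2^{j−k−1}`. -/
def psi (a : ℕ → ℕ) (k : ℕ) : ℝ :=
  ∑ j ∈ Finset.range (k + 1), (a j : ℝ) * (2 : ℝ) ^ ((j : ℤ) - k - 1)

/-- Concatenation `i * c`. -/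
def cons (i : ℕ) (c : ℕ → ℕ) : ℕ → ℕ
  | 0 => i
  | n + 1 => c n

/-- The periodic sequence `(10)^∞ = (1,0,1,0,…)`. -/
def seq10 : ℕ → ℕ := fun n => if n % 2 = 0 then 1 else 0

/-- The periodic sequence `(01)^∞ = (0,1,0,1,…)`. -/
def seq01 : ℕ → ℕ := fun n => n % 2

/-- The periodic sequence `(110)^∞`. -/
def seq110 : ℕ → ℕ := fun n => if n % 3 = 2 then 0 else 1

/-- The periodic sequence `(101)^∞`. -/
def seq101 : ℕ → ℕ := fun n => if n % 3 = 1 then 0 else 1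

/-- The periodic sequence `(011)^∞`. -/
def seq011 : ℕ → ℕ := fun n => if n % 3 = 0 then 0 else 1



/-- Backward orbit along the periodic orbit: `xorb d k z j = T^[(k - j%k)%k] z`. -/
def xorb (d k : ℕ) (z : ℝ) (j : ℕ) : ℝ := (Tmap d)^[(k - j % k) % k] z

/-- The realizing sequence for `stmt2`. -/
def aseq (d k : ℕ) (z : ℝ) (j : ℕ) : ℕ := (⌊(d:ℝ) * xorb d k z (j+1)⌋).toNat

lemma modkey (k j : ℕ) (hk : 0 < k) :
    ((k - (j+1) % k) % k + 1) % k = (k - j % k) % k := by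
  have hr : j % k < k := Nat.mod_lt _ hk
  have h1 : (j+1) % k = (j % k + 1) % k := ((Nat.mod_modEq j k).symm.add_right 1)
  rcases Nat.lt_or_ge (j % k + 1) k with h | h
  · rw [h1, Nat.mod_eq_of_lt h]
    have h2 : k - (j % k + 1) < k := by omega
    rw [Nat.mod_eq_of_lt h2]
    congr 1
    omega
  · have hk1 : j % k + 1 = k := by omega
    rw [h1, hk1, Nat.mod_self, Nat.sub_zero, Nat.mod_self]
    have h3 : k - j % k = 1 := by omega
    rw [h3]

lemma Tmap_mem (d : ℕ) (x : ℝ) : Tmap d x ∈ Ico (0:ℝ) 1 :=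
  ⟨Int.fract_nonneg _, Int.fract_lt_one _⟩

lemma iter_mem (d n : ℕ) (x : ℝ) (hx : x ∈ Ico (0:ℝ) 1) :
    (Tmap d)^[n] x ∈ Ico (0:ℝ) 1 := by
  induction n with
  | zero => simpa
  | succ n ih => rw [Function.iterate_succ_apply']; exact Tmap_mem d _

lemma xorb_per (d k : ℕ) (z : ℝ) (n : ℕ) : xorb d k z (n + k) = xorb d k z n := by
  unfold xorb; rw [Nat.add_mod_right]

lemma xorb_mod (d k : ℕ) (z : ℝ) (n : ℕ) : xorb d k z n = xorb d k z (n % k) := by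
  unfold xorb; rw [Nat.mod_mod_of_dvd _ dvd_rfl]

lemma xorb_zero (d k : ℕ) (z : ℝ) : xorb d k z 0 = z := by
  unfold xorb; simp

/-- on a calibrated periodic orbit of period `k` the realizer can be taken
`σ`-periodic of period `k`, the associated backward orbit stays in the orbit of `z`,
calibration holds along it, and `b(z) = S(z,a)`. -/
theorem stmt2 (lam : ℝ) (hlam0 : 0 < lam) (hlam1 : lam < 1) (d : ℕ) (hd : 2 ≤ d)
    (A : ℝ → ℝ) (K : NNReal) (hLip : LipschitzWith K A) (hper : Function.Periodic A 1)
    (b : ℝ → ℝ) (hb : IsCalibrated lam d A b)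
    (z : ℝ) (hz : z ∈ Icc (0:ℝ) 1) (k : ℕ) (hk : 1 ≤ k) (hzper : (Tmap d)^[k] z = z)
    (hcal : ∀ j : ℕ, b (Tmap d ((Tmap d)^[j] z)) =
      lam * b ((Tmap d)^[j] z) + A ((Tmap d)^[j] z)) :
    ∃ a : ℕ → ℕ, (∀ i, a i < d) ∧ (∀ n, a (n + k) = a n) ∧
      ∃ xs : ℕ → ℝ, xs 0 = z ∧ (∀ j, xs (j + 1) = tau d (a j) (xs j)) ∧
        (∀ j, ∃ m < k, xs j = (Tmap d)^[m] z) ∧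
        (∀ j, b (xs j) = lam * b (xs (j + 1)) + A (xs (j + 1))) ∧
        b z = Sfun lam d A z a := by

  have hkpos : 0 < k := hk
  obtain ⟨k', rfl⟩ : ∃ k', k = k' + 1 := ⟨k - 1, by omega⟩
  have hzIco : z ∈ Ico (0:ℝ) 1 := by
    have h := hzper
    rw [Function.iterate_succ_apply] at h
    exact h ▸ iter_mem d k' (Tmap d z) (Tmap_mem d z)
  set k := k' + 1 with hkeq
  set x : ℕ → ℝ := xorb d k z with hxdef
  set a : ℕ → ℕ := aseq d k z with hadef
  have hxIco : ∀ j, x j ∈ Ico (0:ℝ) 1 := fun j => iter_mem d _ z hzIco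
  have hperz : ∀ p, (Tmap d)^[p] z = (Tmap d)^[p % k] z := by
    intro p
    have hmul : ∀ n, (Tmap d)^[n * k] z = z := by
      intro n
      induction n with
      | zero => simp
      | succ n ih =>
        have : (n + 1) * k = n * k + k := by ring
        rw [this, Function.iterate_add_apply, hzper]
        exact ih
    conv_lhs => rw [← Nat.mod_add_div p k]
    rw [Function.iterate_add_apply]
    congr 1
    rw [mul_comm]
    exact hmul _
  have hT : ∀ j, Tmap d (x (j+1)) = x j := by
    intro j
    have h1 : Tmap d (x (j+1)) = (Tmap d)^[(k - (j+1) % k) % k + 1] z := by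
      rw [Function.iterate_succ_apply']
      rfl
    rw [h1, hperz, modkey k j hkpos]
    rfl
  have hbase : ∀ j, (d:ℝ) * x (j+1) - (⌊(d:ℝ) * x (j+1)⌋ : ℝ) = x j := fun j => hT j
  have hflo : ∀ j, (a j : ℝ) = (⌊(d:ℝ) * x (j+1)⌋ : ℝ) := by
    intro j
    have h0 : (0:ℝ) ≤ (d:ℝ) * x (j+1) :=
      mul_nonneg (by positivity) (hxIco (j+1)).1
    have h1 : (0:ℤ) ≤ ⌊(d:ℝ) * x (j+1)⌋ := Int.floor_nonneg.2 h0
    have h2 : ((a j : ℤ)) = ⌊(d:ℝ) * x (j+1)⌋ := Int.toNat_of_nonneg h1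
    exact_mod_cast h2
  have hfract : ∀ j, (d:ℝ) * x (j+1) - (a j : ℝ) = x j := by
    intro j; rw [hflo j]; exact hbase j
  have hdpos : (0:ℝ) < d := by positivity
  have ha_lt : ∀ j, a j < d := by
    intro j
    have hlt : (d:ℝ) * x (j+1) < d := by
      have := (hxIco (j+1)).2
      nlinarith [(hxIco (j+1)).1]
    have hfl : ⌊(d:ℝ) * x (j+1)⌋ < (d:ℤ) := by
      rw [Int.floor_lt]; exact_mod_cast hlt
    simp only [hadef, aseq, hxdef] at *
    omega
  have htau : ∀ j, tau d (a j) (x j) = x (j+1) := by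
    intro j
    unfold tau
    rw [div_eq_iff (ne_of_gt hdpos)]
    have := hfract j
    linarith
  have ha_per : ∀ n, a (n + k) = a n := by
    intro n
    simp only [hadef, aseq]
    rw [show n + k + 1 = n + 1 + k by ring, xorb_per]
  have hx0 : x 0 = z := xorb_zero d k z
  have hc : ∀ j, b (x j) = lam * b (x (j+1)) + A (x (j+1)) := by
    intro j
    have := hcal ((k - (j+1) % k) % k)
    have hxj : x (j+1) = (Tmap d)^[(k - (j+1) % k) % k] z := rfl
    rw [← hxj] at this
    rw [hT j] at this
    exact this
  have horb : ∀ j, ∃ m < k, x j = (Tmap d)^[m] z := by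
    intro j
    exact ⟨(k - j % k) % k, Nat.mod_lt _ hkpos, rfl⟩
  have htp : ∀ n, tpath d a z n = x (n+1) := by
    intro n
    induction n with
    | zero =>
      show tau d (a 0) z = x 1
      rw [← hx0]; exact htau 0
    | succ n ih =>
      show tau d (a (n+1)) (tpath d a z n) = x (n+2)
      rw [ih]; exact htau (n+1)
  have hps : ∀ n, b z = lam ^ n * b (x n) +
      ∑ j ∈ Finset.range n, lam ^ j * A (x (j+1)) := by
    intro n
    induction n with
    | zero => simp [hx0]
    | succ n ih =>
      rw [Finset.sum_range_succ]
      have := hc n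
      rw [ih, this]
      ring
  have hne : (Finset.range k).Nonempty := ⟨0, Finset.mem_range.2 hkpos⟩
  set M : ℝ := (Finset.range k).sup' hne (fun i => |b (x i)|) with hM
  set C : ℝ := (Finset.range k).sup' hne (fun i => |A (x i)|) with hC
  have hbM : ∀ n, |b (x n)| ≤ M := by
    intro n
    rw [show x n = x (n % k) from xorb_mod d k z n]
    exact Finset.le_sup' (fun i => |b (x i)|) (Finset.mem_range.2 (Nat.mod_lt n hkpos))
  have hAC : ∀ n, |A (x n)| ≤ C := by
    intro n
    rw [show x n = x (n % k) from xorb_mod d k z n]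
    exact Finset.le_sup' (fun i => |A (x i)|) (Finset.mem_range.2 (Nat.mod_lt n hkpos))
  have hlamnn : (0:ℝ) ≤ lam := le_of_lt hlam0
  have hsum : Summable (fun j => lam ^ j * A (x (j+1))) := by
    apply Summable.of_norm_bounded
      ((summable_geometric_of_lt_one hlamnn hlam1).mul_left C)
    intro j
    rw [Real.norm_eq_abs, abs_mul, abs_pow, abs_of_nonneg hlamnn, mul_comm]
    exact mul_le_mul_of_nonneg_right (hAC (j+1)) (pow_nonneg hlamnn j)
  have hzero : Filter.Tendsto (fun n => lam ^ n * b (x n)) Filter.atTop (nhds 0) := by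
    refine squeeze_zero_norm (a := fun n => M * lam ^ n) (fun n => ?_) ?_
    · 
      rw [Real.norm_eq_abs, abs_mul, abs_pow, abs_of_nonneg hlamnn, mul_comm]
      exact mul_le_mul_of_nonneg_right (hbM n) (pow_nonneg hlamnn n)
    · simpa using (tendsto_pow_atTop_nhds_zero_of_lt_one hlamnn hlam1).const_mul M
  have hHS : HasSum (fun j => lam ^ j * A (x (j+1))) (b z) := by
    rw [hsum.hasSum_iff_tendsto_nat]
    have heq : (fun n => ∑ j ∈ Finset.range n, lam ^ j * A (x (j+1)))
        = fun n => b z - lam ^ n * b (x n) := by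
      funext n
      have := hps n
      linarith
    rw [heq]
    simpa using Filter.Tendsto.sub (tendsto_const_nhds (x := b z)) hzero
  refine ⟨a, ha_lt, ha_per, fun j => x j, hx0, fun j => (htau j).symm, horb, hc, ?_⟩
  have : Sfun lam d A z a = ∑' j, lam ^ j * A (x (j+1)) := by
    unfold Sfun
    exact tsum_congr fun j => by rw [htp j]
  rw [this, hHS.tsum_eq]


end
end

section
/- Let 0<λ<1, d≥2, let A:ℝ→ℝ be Lipschitz and 1-periodic, and let b be the λ-calibrated subaction for A. Then the set Ω={(x,a)∈[0,1]×Σ : b(x)=S(x,a)} is invariant under 𝕋^{-1}: if b(x)=S(x,a), then b(τ_{a₀}(x))=S(τ_{a₀}(x),σ(a)), i.e. 𝕋^{-1}(x,a)=(τ_{a₀}(x),σ(a))∈Ω. -/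
open Set

noncomputable section

lemma tau_mem' {d i : ℕ} (hd : 1 ≤ d) (hi : i < d) {x : ℝ} (hx : x ∈ Icc (0:ℝ) 1) :
    tau d i x ∈ Icc (0:ℝ) 1 := by
  have hd0 : (0:ℝ) < d := by exact_mod_cast Nat.lt_of_lt_of_le Nat.zero_lt_one hd
  have hi' : (i:ℝ) + 1 ≤ d := by exact_mod_cast hi
  constructor
  · apply div_nonneg _ hd0.le
    have : (0:ℝ) ≤ i := Nat.cast_nonneg i
    linarith [hx.1]
  · unfold tau
    rw [div_le_one hd0]
    linarith [hx.2]

lemma tpath_mem' {d : ℕ} (hd : 1 ≤ d) {c : ℕ → ℕ} (hc : ∀ k, c k < d) {x : ℝ}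
    (hx : x ∈ Icc (0:ℝ) 1) : ∀ k, tpath d c x k ∈ Icc (0:ℝ) 1
  | 0 => tau_mem' hd (hc 0) hx
  | k + 1 => tau_mem' hd (hc (k+1)) (tpath_mem' hd hc hx k)

lemma tpath_shift' (d : ℕ) (c : ℕ → ℕ) (y : ℝ) :
    ∀ k, tpath d c y (k+1) = tpath d (shift c) (tau d (c 0) y) k
  | 0 => rfl
  | k + 1 => by
    show tau d (c (k+2)) (tpath d c y (k+1))
        = tau d (shift c (k+1)) (tpath d (shift c) (tau d (c 0) y) k)
    rw [tpath_shift' d c y k]; rfl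

/-- The n-th point along the inverse orbit. -/
def ptAux (d : ℕ) : ℕ → (ℕ → ℕ) → ℝ → ℝ
  | 0, _, y => y
  | n + 1, c, y => ptAux d n (shift c) (tau d (c 0) y)

lemma ptAux_mem {d : ℕ} (hd : 1 ≤ d) :
    ∀ n (c : ℕ → ℕ), (∀ k, c k < d) → ∀ x ∈ Icc (0:ℝ) 1, ptAux d n c x ∈ Icc (0:ℝ) 1
  | 0, _, _, _, hx => hx
  | n + 1, c, hc, x, hx =>
    ptAux_mem hd n (shift c) (fun k => hc (k+1)) _ (tau_mem' hd (hc 0) hx)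

lemma summable_S (lam : ℝ) (hlam0 : 0 < lam) (hlam1 : lam < 1) {d : ℕ} (hd : 1 ≤ d)
    {M : ℝ} {A : ℝ → ℝ} (hM : ∀ y ∈ Icc (0:ℝ) 1, ‖A y‖ ≤ M)
    {c : ℕ → ℕ} (hc : ∀ k, c k < d) {x : ℝ} (hx : x ∈ Icc (0:ℝ) 1) :
    Summable (fun k : ℕ => lam ^ k * A (tpath d c x k)) := by
  apply Summable.of_norm_bounded (g := fun k : ℕ => lam ^ k * M)
  · exact (summable_geometric_of_lt_one hlam0.le hlam1).mul_right M
  · intro k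
    rw [norm_mul, norm_pow, Real.norm_of_nonneg hlam0.le]
    exact mul_le_mul_of_nonneg_left (hM _ (tpath_mem' hd hc hx k)) (by positivity)

lemma Sfun_rec (lam : ℝ) (hlam0 : 0 < lam) (hlam1 : lam < 1) {d : ℕ} (hd : 1 ≤ d)
    {M : ℝ} {A : ℝ → ℝ} (hM : ∀ y ∈ Icc (0:ℝ) 1, ‖A y‖ ≤ M)
    {c : ℕ → ℕ} (hc : ∀ k, c k < d) {x : ℝ} (hx : x ∈ Icc (0:ℝ) 1) :
    Sfun lam d A x c = A (tau d (c 0) x) + lam * Sfun lam d A (tau d (c 0) x) (shift c) := by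
  have hsum := summable_S lam hlam0 hlam1 hd hM hc hx
  unfold Sfun
  rw [hsum.tsum_eq_zero_add]
  simp only [pow_zero, one_mul]
  have h0 : tpath d c x 0 = tau d (c 0) x := rfl
  rw [h0, ← tsum_mul_left]
  congr 1
  exact tsum_congr fun k => by rw [tpath_shift' d c x k]; ring

lemma b_ge_S (lam : ℝ) (hlam0 : 0 < lam) (hlam1 : lam < 1) {d : ℕ} (hd : 1 ≤ d)
    {A : ℝ → ℝ} (hA : ContinuousOn A (Icc 0 1))
    {b : ℝ → ℝ} (hb : IsCalibrated lam d A b) :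
    ∀ x ∈ Icc (0:ℝ) 1, ∀ c : ℕ → ℕ, (∀ k, c k < d) → Sfun lam d A x c ≤ b x := by
  obtain ⟨MA, hMA⟩ := isCompact_Icc.exists_bound_of_continuousOn hA
  obtain ⟨MB, hMB⟩ := isCompact_Icc.exists_bound_of_continuousOn hb.1
  have key : ∀ n : ℕ, ∀ x ∈ Icc (0:ℝ) 1, ∀ c : ℕ → ℕ, (∀ k, c k < d) →
      (∑ k ∈ Finset.range n, lam ^ k * A (tpath d c x k)) + lam ^ n * b (ptAux d n c x)
        ≤ b x := by
    intro n
    induction n with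
    | zero => intro x hx c hc; simp [ptAux]
    | succ n ih =>
      intro x hx c hc
      have hτ : tau d (c 0) x ∈ Icc (0:ℝ) 1 := tau_mem' hd (hc 0) hx
      have hIH := ih (tau d (c 0) x) hτ (shift c) (fun k => hc (k+1))
      have hcal : lam * b (tau d (c 0) x) + A (tau d (c 0) x) ≤ b x :=
        (hb.2.2 x hx).2 ⟨c 0, hc 0, rfl⟩
      have hstep : (∑ k ∈ Finset.range (n+1), lam ^ k * A (tpath d c x k))
          + lam ^ (n+1) * b (ptAux d (n+1) c x)
          = lam * ((∑ k ∈ Finset.range n, lam ^ k * A (tpath d (shift c) (tau d (c 0) x) k))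
              + lam ^ n * b (ptAux d n (shift c) (tau d (c 0) x)))
            + A (tau d (c 0) x) := by
        rw [Finset.sum_range_succ']
        simp only [pow_zero, one_mul]
        have : ∀ k, tpath d c x (k+1) = tpath d (shift c) (tau d (c 0) x) k :=
          tpath_shift' d c x
        have hsum_eq : ∑ k ∈ Finset.range n, lam ^ (k+1) * A (tpath d c x (k+1))
            = lam * ∑ k ∈ Finset.range n,
                lam ^ k * A (tpath d (shift c) (tau d (c 0) x) k) := by
          rw [Finset.mul_sum]
          exact Finset.sum_congr rfl fun k _ => by rw [this k]; ring
        have h0 : tpath d c x 0 = tau d (c 0) x := rfl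
        have hpt : ptAux d (n+1) c x = ptAux d n (shift c) (tau d (c 0) x) := rfl
        rw [hsum_eq, h0, hpt]
        ring
      rw [hstep]
      calc lam * (_ + _) + A (tau d (c 0) x)
          ≤ lam * b (tau d (c 0) x) + A (tau d (c 0) x) := by
            have := mul_le_mul_of_nonneg_left hIH hlam0.le
            linarith
        _ ≤ b x := hcal
  intro x hx c hc
  have hsum := summable_S lam hlam0 hlam1 hd hMA hc hx
  have h1 : Filter.Tendsto (fun n => ∑ k ∈ Finset.range n, lam ^ k * A (tpath d c x k))
      Filter.atTop (nhds (Sfun lam d A x c)) := hsum.hasSum.tendsto_sum_nat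
  have h2 : Filter.Tendsto (fun n => lam ^ n * b (ptAux d n c x))
      Filter.atTop (nhds 0) := by
    have hg : Filter.Tendsto (fun n => lam ^ n * MB) Filter.atTop (nhds 0) := by
      simpa using (tendsto_pow_atTop_nhds_zero_of_lt_one hlam0.le hlam1).mul_const MB
    refine squeeze_zero_norm (fun n => ?_) hg
    rw [norm_mul, norm_pow, Real.norm_of_nonneg hlam0.le]
    exact mul_le_mul_of_nonneg_left (hMB _ (ptAux_mem hd n c hc x hx)) (by positivity)
  have h3 : Filter.Tendsto
      (fun n => (∑ k ∈ Finset.range n, lam ^ k * A (tpath d c x k))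
        + lam ^ n * b (ptAux d n c x)) Filter.atTop (nhds (Sfun lam d A x c)) := by
    simpa using h1.add h2
  exact le_of_tendsto h3 (Filter.Eventually.of_forall (fun n => key n x hx c hc))

/-- the set `Ω = {(x,a) : b(x) = S(x,a)}` is invariant under
`𝕋⁻¹(x,a) = (τ_{a₀}(x), σ(a))`. -/
theorem stmt8 (lam : ℝ) (hlam0 : 0 < lam) (hlam1 : lam < 1) (d : ℕ) (hd : 2 ≤ d)
    (A : ℝ → ℝ) (K : NNReal) (hLip : LipschitzWith K A) (hper : Function.Periodic A 1)
    (b : ℝ → ℝ) (hb : IsCalibrated lam d A b) :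
    ∀ x ∈ Icc (0:ℝ) 1, ∀ a : ℕ → ℕ, (∀ k, a k < d) →
      b x = Sfun lam d A x a →
      b (tau d (a 0) x) = Sfun lam d A (tau d (a 0) x) (shift a) := by
  intro x hx a ha hbx
  have hd1 : 1 ≤ d := le_trans one_le_two hd
  obtain ⟨MA, hMA⟩ := isCompact_Icc.exists_bound_of_continuousOn
    (hLip.continuous.continuousOn : ContinuousOn A (Icc (0:ℝ) 1))
  have hτ : tau d (a 0) x ∈ Icc (0:ℝ) 1 := tau_mem' hd1 (ha 0) hx
  have hrec := Sfun_rec lam hlam0 hlam1 hd1 hMA ha hx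
  have hge : Sfun lam d A (tau d (a 0) x) (shift a) ≤ b (tau d (a 0) x) :=
    b_ge_S lam hlam0 hlam1 hd1 hLip.continuous.continuousOn hb _ hτ (shift a)
      (fun k => ha (k+1))
  have hle : lam * b (tau d (a 0) x) + A (tau d (a 0) x) ≤ b x :=
    (hb.2.2 x hx).2 ⟨a 0, ha 0, rfl⟩
  have : lam * b (tau d (a 0) x) ≤ lam * Sfun lam d A (tau d (a 0) x) (shift a) := by
    rw [hbx, hrec] at hle; linarith
  have hle' : b (tau d (a 0) x) ≤ Sfun lam d A (tau d (a 0) x) (shift a) :=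
    le_of_mul_le_mul_left this hlam0
  linarith

end
end

section
/- Let 0<λ<1, d=2, and let A:ℝ→ℝ be C¹, 1-periodic and symmetric, i.e. A(1−x)=A(x) for all x∈[0,1], and assume A satisfies the twist condition. Then S(x,(10)^∞)=S(1−x,(01)^∞) for all x, S(1/2,(10)^∞)=S(1/2,(01)^∞), and the function b:[0,1]→ℝ defined by b(x)=S(x,(10)^∞) for 0≤x≤1/2 and b(x)=S(x,(01)^∞) for 1/2<x≤1 is the λ-calibrated subaction for A: it is continuous and satisfies b(x)=max_{i=0,1}(λ b(τ_i x)+A(τ_i x)) for every x∈[0,1]. -/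
open Set

noncomputable section

namespace Stmt11Aux

lemma tau_two (i : ℕ) (x : ℝ) : tau 2 i x = (x + i) / 2 := by
  simp [tau]

lemma seq_cases (n : ℕ) : (seq01 n = 0 ∧ seq10 n = 1) ∨ (seq01 n = 1 ∧ seq10 n = 0) := by
  rcases Nat.mod_two_eq_zero_or_one n with h | h <;> simp [seq01, seq10, h]

lemma seq10_eq_cons : seq10 = cons 1 seq01 := by
  funext n
  cases n with
  | zero => simp [seq10, cons]
  | succ m =>
    show seq10 (m+1) = seq01 m
    rcases Nat.mod_two_eq_zero_or_one m with h | h <;>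
      simp [seq10, seq01, Nat.add_mod, h]

lemma seq01_eq_cons : seq01 = cons 0 seq10 := by
  funext n
  cases n with
  | zero => simp [seq01, cons]
  | succ m =>
    show seq01 (m+1) = seq10 m
    rcases Nat.mod_two_eq_zero_or_one m with h | h <;>
      simp [seq10, seq01, Nat.add_mod, h]

lemma seq01_lt (k : ℕ) : seq01 k < 2 := by
  simp only [seq01]; omega

lemma seq10_lt (k : ℕ) : seq10 k < 2 := by
  simp only [seq10]; split <;> omega

lemma lex0110 : lexLt seq01 seq10 := by
  refine ⟨0, fun i hi => absurd hi (Nat.not_lt_zero i), ?_⟩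
  simp [seq01, seq10]

lemma tpath_cons (d i : ℕ) (c : ℕ → ℕ) (x : ℝ) :
    ∀ k, tpath d (cons i c) x (k+1) = tpath d c (tau d i x) k
  | 0 => rfl
  | k+1 => by
    show tau d (cons i c (k+2)) (tpath d (cons i c) x (k+1)) = _
    rw [tpath_cons d i c x k]
    rfl

lemma exists_bound {f : ℝ → ℝ} (hf : Continuous f) (hp : Function.Periodic f 1) :
    ∃ M : ℝ, 0 ≤ M ∧ ∀ x, |f x| ≤ M := by
  obtain ⟨C, hC⟩ := (isCompact_Icc (a := (0:ℝ)) (b := 1)).exists_bound_of_continuousOn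
    hf.continuousOn
  refine ⟨max C 0, le_max_right _ _, fun x => ?_⟩
  have h1 : f (Int.fract x) = f x := by
    have h := hp.sub_int_mul_eq (x := x) ⌊x⌋
    rw [mul_one] at h
    rw [show Int.fract x = x - ⌊x⌋ from rfl, h]
  calc |f x| = |f (Int.fract x)| := by rw [h1]
    _ ≤ C := by
        have := hC (Int.fract x) ⟨Int.fract_nonneg x, (Int.fract_lt_one x).le⟩
        simpa [Real.norm_eq_abs] using this
    _ ≤ max C 0 := le_max_left _ _

lemma sym_all {A : ℝ → ℝ} (hper : Function.Periodic A 1)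
    (hsym : ∀ x ∈ Icc (0:ℝ) 1, A (1 - x) = A x) (x : ℝ) : A (1 - x) = A x := by
  have hfr : Int.fract x ∈ Icc (0:ℝ) 1 := ⟨Int.fract_nonneg x, (Int.fract_lt_one x).le⟩
  have e1 : A (Int.fract x) = A x := by
    have h := hper.sub_int_mul_eq (x := x) ⌊x⌋
    rw [mul_one] at h
    rw [show Int.fract x = x - ⌊x⌋ from rfl, h]
  have e2 : A (1 - Int.fract x) = A (1 - x) := by
    have h := hper.sub_int_mul_eq (x := 1 - Int.fract x) ⌊x⌋
    rw [mul_one] at h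
    rw [← h]
    congr 1
    rw [show Int.fract x = x - ⌊x⌋ from rfl]
    ring
  rw [← e1, ← e2, hsym _ hfr]

lemma tpath_symm (x : ℝ) : ∀ k, tpath 2 seq01 (1 - x) k = 1 - tpath 2 seq10 x k := by
  intro k
  induction k with
  | zero =>
    show tau 2 (seq01 0) (1 - x) = 1 - tau 2 (seq10 0) x
    rw [show seq01 0 = 0 from rfl, show seq10 0 = 1 from rfl, tau_two, tau_two]
    push_cast; ring
  | succ m ih =>
    show tau 2 (seq01 (m+1)) (tpath 2 seq01 (1-x) m) = 1 - tau 2 (seq10 (m+1)) (tpath 2 seq10 x m)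
    rw [ih]
    rcases seq_cases (m+1) with ⟨h1, h2⟩ | ⟨h1, h2⟩ <;>
      rw [h1, h2, tau_two, tau_two] <;> push_cast <;> ring

lemma sfun_summable {lam : ℝ} (h0 : 0 ≤ lam) (h1 : lam < 1) {A : ℝ → ℝ} {M : ℝ}
    (hM : ∀ x, |A x| ≤ M) (a : ℕ → ℕ) (x : ℝ) :
    Summable (fun k : ℕ => lam ^ k * A (tpath 2 a x k)) := by
  apply Summable.of_norm_bounded (g := fun k => M * lam ^ k)
    ((summable_geometric_of_lt_one h0 h1).mul_left M)
  intro k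
  rw [Real.norm_eq_abs, abs_mul, abs_pow, abs_of_nonneg h0, mul_comm]
  exact mul_le_mul_of_nonneg_right (hM _) (pow_nonneg h0 k)

lemma sfun_cons {lam : ℝ} (h0 : 0 ≤ lam) (h1 : lam < 1) {A : ℝ → ℝ} {M : ℝ}
    (hM : ∀ x, |A x| ≤ M) (i : ℕ) (c : ℕ → ℕ) (x : ℝ) :
    Sfun lam 2 A x (cons i c) = A (tau 2 i x) + lam * Sfun lam 2 A (tau 2 i x) c := by
  unfold Sfun
  rw [Summable.tsum_eq_zero_add (sfun_summable h0 h1 hM _ x)]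
  rw [← tsum_mul_left]
  congr 1
  · show lam ^ 0 * A (tau 2 (cons i c 0) x) = A (tau 2 i x)
    rw [show cons i c 0 = i from rfl, pow_zero, one_mul]
  · apply tsum_congr; intro k
    rw [tpath_cons, pow_succ]; ring

lemma sfun_symm {lam : ℝ} {A : ℝ → ℝ} (hsym : ∀ x : ℝ, A (1 - x) = A x) (x : ℝ) :
    Sfun lam 2 A x seq10 = Sfun lam 2 A (1 - x) seq01 := by
  unfold Sfun
  apply tsum_congr; intro k
  rw [tpath_symm, hsym]

lemma tpath_hasDerivAt (a : ℕ → ℕ) (x : ℝ) :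
    ∀ k, HasDerivAt (fun y => tpath 2 a y k) ((1/2 : ℝ) ^ (k+1)) x := by
  intro k
  induction k with
  | zero =>
    have hfun : (fun y => tpath 2 a y 0) = fun y : ℝ => (y + (a 0 : ℝ)) / 2 := by
      funext y; show tau 2 (a 0) y = _; rw [tau_two]
    rw [hfun, show ((1/2:ℝ)) ^ (0+1) = 1/2 by norm_num]
    exact ((hasDerivAt_id x).add_const _).div_const 2
  | succ m ih =>
    have hfun : (fun y => tpath 2 a y (m+1)) = fun y => (tpath 2 a y m + (a (m+1) : ℝ)) / 2 := by
      funext y; show tau 2 (a (m+1)) (tpath 2 a y m) = _; rw [tau_two]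
    rw [hfun, show ((1/2:ℝ)) ^ (m+1+1) = (1/2:ℝ)^(m+1) / 2 by ring]
    exact (ih.add_const _).div_const 2

lemma sfun_hasDerivAt {lam : ℝ} (h0 : 0 < lam) (h1 : lam < 1) {A : ℝ → ℝ}
    (hA : ContDiff ℝ 1 A) {M M' : ℝ} (hM : ∀ x, |A x| ≤ M)
    (hMd : ∀ x, |deriv A x| ≤ M') (a : ℕ → ℕ) (x : ℝ) :
    HasDerivAt (fun y => Sfun lam 2 A y a)
      (∑' k : ℕ, lam ^ k * (deriv A (tpath 2 a x k) * (1/2:ℝ)^(k+1))) x := by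
  have hu : Summable (fun k : ℕ => M' * lam ^ k) :=
    (summable_geometric_of_lt_one h0.le h1).mul_left _
  have hder : ∀ (k : ℕ) (y : ℝ), HasDerivAt (fun z => lam ^ k * A (tpath 2 a z k))
      (lam ^ k * (deriv A (tpath 2 a y k) * (1/2:ℝ)^(k+1))) y := by
    intro k y
    exact ((hA.differentiable one_ne_zero _).hasDerivAt.comp y (tpath_hasDerivAt a y k)).const_mul _
  have hbound : ∀ (k : ℕ) (y : ℝ),
      ‖lam ^ k * (deriv A (tpath 2 a y k) * (1/2:ℝ)^(k+1))‖ ≤ M' * lam ^ k := by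
    intro k y
    rw [Real.norm_eq_abs, abs_mul, abs_mul, abs_pow, abs_pow, abs_of_nonneg h0.le]
    have hd := hMd (tpath 2 a y k)
    have hM'0 : 0 ≤ M' := le_trans (abs_nonneg _) hd
    calc lam ^ k * (|deriv A (tpath 2 a y k)| * |(1/2:ℝ)| ^ (k+1))
        ≤ lam ^ k * (M' * 1) := by
          apply mul_le_mul_of_nonneg_left _ (pow_nonneg h0.le k)
          have hhalf : |(1/2:ℝ)| ^ (k+1) ≤ 1 := by
            rw [abs_of_nonneg (by norm_num : (0:ℝ) ≤ 1/2)]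
            exact pow_le_one₀ (by norm_num) (by norm_num)
          exact mul_le_mul hd hhalf (by positivity) hM'0
      _ = M' * lam ^ k := by ring
  exact hasDerivAt_tsum hu hder hbound (sfun_summable h0.le h1 hM a x) x

end Stmt11Aux

/-- for a symmetric twist potential, `S(x,(10)^∞) = S(1−x,(01)^∞)`,
`S(1/2,(10)^∞) = S(1/2,(01)^∞)`, and the function equal to `S(·,(10)^∞)` on `[0,1/2]`
and to `S(·,(01)^∞)` on `(1/2,1]` is the λ-calibrated subaction for `A`. -/
theorem stmt11 (lam : ℝ) (hlam0 : 0 < lam) (hlam1 : lam < 1)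
    (A : ℝ → ℝ) (hA : ContDiff ℝ 1 A) (hper : Function.Periodic A 1)
    (hsym : ∀ x ∈ Icc (0:ℝ) 1, A (1 - x) = A x)
    (htwist : Twist lam 2 A)
    (b : ℝ → ℝ)
    (hbdef : ∀ x : ℝ,
      b x = if x ≤ 1/2 then Sfun lam 2 A x seq10 else Sfun lam 2 A x seq01) :
    (∀ x ∈ Icc (0:ℝ) 1, Sfun lam 2 A x seq10 = Sfun lam 2 A (1 - x) seq01) ∧
    Sfun lam 2 A (1/2) seq10 = Sfun lam 2 A (1/2) seq01 ∧
    IsCalibrated lam 2 A b := by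
  classical
  obtain ⟨M, hM0, hM⟩ := Stmt11Aux.exists_bound hA.continuous hper
  have hAd : Differentiable ℝ A := hA.differentiable one_ne_zero
  have hdercont : Continuous (deriv A) := hA.continuous_deriv le_rfl
  have hdper : Function.Periodic (deriv A) 1 := by
    intro x
    have h1 : HasDerivAt (fun y => A (y + 1)) (deriv A (x + 1)) x := by
      have := ((hAd (x+1)).hasDerivAt).comp x ((hasDerivAt_id x).add_const 1)
      simpa [Function.comp_def] using this
    have h2 : (fun y : ℝ => A (y + 1)) = A := funext fun y => hper y
    rw [h2] at h1
    exact h1.deriv.symm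
  obtain ⟨M', hM'0, hMd⟩ := Stmt11Aux.exists_bound hdercont hdper
  have hsym' := Stmt11Aux.sym_all hper hsym
  have part1 : ∀ x : ℝ, Sfun lam 2 A x seq10 = Sfun lam 2 A (1-x) seq01 :=
    Stmt11Aux.sfun_symm hsym'
  have part2 : Sfun lam 2 A (1/2) seq10 = Sfun lam 2 A (1/2) seq01 := by
    have h := part1 (1/2); norm_num at h; exact h
  have h01at := fun x => Stmt11Aux.sfun_hasDerivAt hlam0 hlam1 hA hM hMd seq01 x
  have h10at := fun x => Stmt11Aux.sfun_hasDerivAt hlam0 hlam1 hA hM hMd seq10 x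
  have hdiff : Differentiable ℝ (fun y => Sfun lam 2 A y seq01 - Sfun lam 2 A y seq10) :=
    fun x => ((h01at x).sub (h10at x)).differentiableAt
  have hmono : StrictMonoOn (fun y => Sfun lam 2 A y seq01 - Sfun lam 2 A y seq10)
      (Icc (0:ℝ) 1) := by
    apply strictMonoOn_of_deriv_pos (convex_Icc 0 1) hdiff.continuous.continuousOn
    intro x hx
    rw [interior_Icc] at hx
    have heq : deriv (fun y => Sfun lam 2 A y seq01 - Sfun lam 2 A y seq10) x
        = deriv (fun y => Sfun lam 2 A y seq01) x - deriv (fun y => Sfun lam 2 A y seq10) x := by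
      rw [show (fun y => Sfun lam 2 A y seq01 - Sfun lam 2 A y seq10) = (fun y => Sfun lam 2 A y seq01) - (fun y => Sfun lam 2 A y seq10) from rfl, ((h01at x).sub (h10at x)).deriv, (h01at x).deriv, (h10at x).deriv]
    rw [heq]
    exact htwist seq01 seq10 Stmt11Aux.seq01_lt Stmt11Aux.seq10_lt Stmt11Aux.lex0110 x hx
  have hle : ∀ x : ℝ, 0 ≤ x → x ≤ 1/2 →
      Sfun lam 2 A x seq01 ≤ Sfun lam 2 A x seq10 := by
    intro x hx0 hx2
    rcases eq_or_lt_of_le hx2 with h | h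
    · rw [h]; exact le_of_eq part2.symm
    · have hlt := hmono ⟨hx0, by linarith⟩ ⟨by norm_num, by norm_num⟩ h
      simp only at hlt
      linarith [part2]
  have hgt : ∀ x : ℝ, 1/2 < x → x ≤ 1 →
      Sfun lam 2 A x seq10 ≤ Sfun lam 2 A x seq01 := by
    intro x h1 h2
    have hlt := hmono ⟨by norm_num, by norm_num⟩ ⟨by linarith, h2⟩ h1
    simp only at hlt
    linarith [part2]
  have htau0 : ∀ x : ℝ, tau 2 0 x = x / 2 := fun x => by
    rw [Stmt11Aux.tau_two]; norm_num
  have htau1 : ∀ x : ℝ, tau 2 1 x = (x + 1) / 2 := fun x => by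
    rw [Stmt11Aux.tau_two]; norm_num
  have hb0 : ∀ x : ℝ, x ≤ 1 → b (tau 2 0 x) = Sfun lam 2 A (tau 2 0 x) seq10 := by
    intro x hx1
    rw [hbdef, if_pos]
    rw [htau0]; linarith
  have hb1 : ∀ x : ℝ, 0 ≤ x → b (tau 2 1 x) = Sfun lam 2 A (tau 2 1 x) seq01 := by
    intro x hx0
    rw [hbdef]
    by_cases h : tau 2 1 x ≤ 1/2
    · rw [if_pos h]
      have he : tau 2 1 x = 1/2 := by
        rw [htau1] at h ⊢; linarith
      rw [he, part2]
    · rw [if_neg h]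
  have hval0 : ∀ x : ℝ, x ≤ 1 →
      lam * b (tau 2 0 x) + A (tau 2 0 x) = Sfun lam 2 A x seq01 := by
    intro x hx1
    rw [hb0 x hx1]
    have h := Stmt11Aux.sfun_cons hlam0.le hlam1 hM 0 seq10 x
    rw [← Stmt11Aux.seq01_eq_cons] at h
    rw [h]; ring
  have hval1 : ∀ x : ℝ, 0 ≤ x →
      lam * b (tau 2 1 x) + A (tau 2 1 x) = Sfun lam 2 A x seq10 := by
    intro x hx0
    rw [hb1 x hx0]
    have h := Stmt11Aux.sfun_cons hlam0.le hlam1 hM 1 seq01 x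
    rw [← Stmt11Aux.seq10_eq_cons] at h
    rw [h]; ring
  have hc10 : Continuous (fun y => Sfun lam 2 A y seq10) :=
    Differentiable.continuous fun x => (h10at x).differentiableAt
  have hc01 : Continuous (fun y => Sfun lam 2 A y seq01) :=
    Differentiable.continuous fun x => (h01at x).differentiableAt
  have hbeq : b = fun x => if x ≤ 1/2 then Sfun lam 2 A x seq10 else Sfun lam 2 A x seq01 :=
    funext hbdef
  have hbc : Continuous b := by
    rw [hbeq]
    exact Continuous.if_le hc10 hc01 continuous_id continuous_const
      (fun x hx => by subst hx; exact part2)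
  have hb01 : b 0 = b 1 := by
    rw [hbdef, hbdef, if_pos (by norm_num), if_neg (by norm_num)]
    have h := part1 0; norm_num at h; exact h
  refine ⟨fun x _ => part1 x, part2, hbc.continuousOn, hb01, ?_⟩
  intro x hx
  constructor
  · by_cases h : x ≤ 1/2
    · exact ⟨1, by norm_num, by rw [hbdef x, if_pos h, hval1 x hx.1]⟩
    · exact ⟨0, by norm_num, by rw [hbdef x, if_neg h, hval0 x hx.2]⟩
  · rintro y ⟨i, hi, rfl⟩
    interval_cases i
    · rw [hval0 x hx.2]
      by_cases h : x ≤ 1/2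
      · rw [hbdef x, if_pos h]
        exact hle x hx.1 h
      · rw [hbdef x, if_neg h]
    · rw [hval1 x hx.1]
      by_cases h : x ≤ 1/2
      · rw [hbdef x, if_pos h]
      · rw [hbdef x, if_neg h]
        exact hgt x (not_le.mp h) hx.2

end
end

section
/- Let 0<λ<1, d=2, and let A:ℝ→ℝ be C¹, 1-periodic, satisfying the twist condition. Let x₀=3/7, so T(x₀)=6/7, T²(x₀)=5/7, T³(x₀)=x₀. Assume S(x₀,(110)^∞)=sup_a S(x₀,a), S(6/7,(011)^∞)=sup_a S(6/7,a), S(5/7,(101)^∞)=sup_a S(5/7,a). Let u∈[3/7,5/7] satisfy S(u,(110)^∞)=S(u,(101)^∞) and v∈[5/7,6/7] satisfy S(v,(101)^∞)=S(v,(011)^∞). Define b:[0,1]→ℝ by b(x)=S(x,(110)^∞) for 0≤x≤u, b(x)=S(x,(101)^∞) for u≤x≤v, b(x)=S(x,(011)^∞) for v≤x≤1. Then b satisfies the calibration equation b(x)=max_{i=0,1}(λ b(τ_i x)+A(τ_i x)) for all x∈[0,1] if and only if τ₁([0,u])⊆[u,v], τ₁([u,v])⊆[v,1], and τ₀([v,1])⊆[0,u].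 -/
open Set

noncomputable section

-- sequence lemmas
lemma adm110 : ∀ k, seq110 k < 2 := by intro k; unfold seq110; split <;> omega
lemma adm101 : ∀ k, seq101 k < 2 := by intro k; unfold seq101; split <;> omega
lemma adm011 : ∀ k, seq011 k < 2 := by intro k; unfold seq011; split <;> omega

lemma cons1_101 : cons 1 seq101 = seq110 := by
  funext n
  cases n with
  | zero => rfl
  | succ m => simp only [cons, seq101, seq110]; split <;> split <;> omega

lemma cons1_011 : cons 1 seq011 = seq101 := by
  funext n
  cases n with
  | zero => rfl
  | succ m => simp only [cons, seq011, seq101]; split <;> split <;> omega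

lemma cons0_110 : cons 0 seq110 = seq011 := by
  funext n
  cases n with
  | zero => rfl
  | succ m => simp only [cons, seq110, seq011]; split <;> split <;> omega

lemma lex_011_101 : lexLt seq011 seq101 :=
  ⟨0, fun i h => absurd h (Nat.not_lt_zero i), by norm_num [seq011, seq101]⟩

lemma lex_101_110 : lexLt seq101 seq110 := by
  refine ⟨1, fun i h => ?_, by norm_num [seq101, seq110]⟩
  interval_cases i
  rfl

-- boundedness of periodic continuous functions
lemma bdd_of_periodic {f : ℝ → ℝ} (hf : Continuous f) (hp : Function.Periodic f 1) :
    ∃ M : ℝ, ∀ x, ‖f x‖ ≤ M := by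
  obtain ⟨C, hC⟩ :=
    (isCompact_Icc (a := (0:ℝ)) (b := 1)).exists_bound_of_continuousOn hf.continuousOn
  refine ⟨C, fun x => ?_⟩
  have h1 : f (Int.fract x) = f x := by
    have h2 := hp.sub_int_mul_eq (x := x) ⌊x⌋
    rw [mul_one, Int.self_sub_floor] at h2
    exact h2
  rw [← h1]
  exact hC _ ⟨Int.fract_nonneg x, (Int.fract_lt_one x).le⟩

lemma summable_term {lam : ℝ} {A : ℝ → ℝ} (hlam0 : 0 ≤ lam) (hlam1 : lam < 1) {M : ℝ}
    (hM : ∀ y, ‖A y‖ ≤ M) (a : ℕ → ℕ) (x : ℝ) :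
    Summable fun k => lam ^ k * A (tpath 2 a x k) := by
  apply Summable.of_norm_bounded
    ((summable_geometric_of_lt_one hlam0 hlam1).mul_left M)
  intro k
  rw [norm_mul, Real.norm_eq_abs (lam ^ k), abs_of_nonneg (pow_nonneg hlam0 k)]
  calc lam ^ k * ‖A (tpath 2 a x k)‖ ≤ lam ^ k * M := by
        gcongr; exact hM _
    _ = M * lam ^ k := by ring

lemma tpath_hasDerivAt (a : ℕ → ℕ) (x : ℝ) :
    ∀ k, HasDerivAt (fun y => tpath 2 a y k) ((1/2 : ℝ) ^ (k+1)) x := by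
  intro k
  induction k with
  | zero =>
    have h : HasDerivAt (fun y : ℝ => (y + (a 0 : ℝ)) / 2) (1/2) x :=
      ((hasDerivAt_id x).add_const _).div_const 2
    simpa [tpath, tau] using h
  | succ m ih =>
    have h : HasDerivAt (fun y => (tpath 2 a y m + (a (m+1) : ℝ)) / 2) ((1/2:ℝ)^(m+1) / 2) x :=
      (ih.add_const _).div_const 2
    have h2 : (1/2:ℝ)^(m+1) / 2 = (1/2:ℝ)^(m+2) := by ring
    rw [h2] at h
    simpa [tpath, tau] using h

lemma Sfun_hasDerivAt {lam : ℝ} {A : ℝ → ℝ} (hlam0 : 0 ≤ lam) (hlam1 : lam < 1)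
    (hA : ContDiff ℝ 1 A) {M M' : ℝ} (hM : ∀ y, ‖A y‖ ≤ M) (hM' : ∀ y, ‖deriv A y‖ ≤ M')
    (a : ℕ → ℕ) (x : ℝ) :
    HasDerivAt (fun y => Sfun lam 2 A y a)
      (∑' k : ℕ, lam ^ k * (deriv A (tpath 2 a x k) * (1/2 : ℝ) ^ (k+1))) x := by
  have hu : Summable (fun k : ℕ => M' * lam ^ k) :=
    (summable_geometric_of_lt_one hlam0 hlam1).mul_left M'
  have hg : ∀ (k : ℕ) (y : ℝ), HasDerivAt (fun z => lam ^ k * A (tpath 2 a z k))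
      (lam ^ k * (deriv A (tpath 2 a y k) * (1/2 : ℝ)^(k+1))) y := by
    intro k y
    have h1 : HasDerivAt A (deriv A (tpath 2 a y k)) (tpath 2 a y k) :=
      ((hA.differentiable one_ne_zero) _).hasDerivAt
    have h2 := (h1.comp y (tpath_hasDerivAt a y k)).const_mul (lam ^ k)
    simpa [Function.comp] using h2
  have hg' : ∀ (k : ℕ) (y : ℝ),
      ‖lam ^ k * (deriv A (tpath 2 a y k) * (1/2 : ℝ)^(k+1))‖ ≤ M' * lam ^ k := by
    intro k y
    rw [norm_mul, norm_mul, Real.norm_eq_abs (lam ^ k), abs_of_nonneg (pow_nonneg hlam0 k)]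
    have e2 : ‖(1/2:ℝ)^(k+1)‖ ≤ 1 := by
      rw [Real.norm_eq_abs, abs_of_nonneg (by positivity)]
      exact pow_le_one₀ (by norm_num) (by norm_num)
    calc lam ^ k * (‖deriv A (tpath 2 a y k)‖ * ‖(1/2:ℝ)^(k+1)‖)
        ≤ lam ^ k * (M' * 1) := by
          gcongr
          · exact le_trans (norm_nonneg _) (hM' 0)
          · exact hM' _
      _ = M' * lam ^ k := by ring
  exact hasDerivAt_tsum hu hg hg' (summable_term hlam0 hlam1 hM a 0) x

lemma tpath_cons (i : ℕ) (w : ℕ → ℕ) (x : ℝ) :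
    ∀ k, tpath 2 (cons i w) x (k + 1) = tpath 2 w (tau 2 i x) k := by
  intro k
  induction k with
  | zero => rfl
  | succ m ih =>
    show tau 2 (cons i w (m+2)) (tpath 2 (cons i w) x (m+1))
      = tau 2 (w (m+1)) (tpath 2 w (tau 2 i x) m)
    rw [ih]
    rfl

lemma Srec {lam : ℝ} {A : ℝ → ℝ} (hlam0 : 0 ≤ lam) (hlam1 : lam < 1) {M : ℝ}
    (hM : ∀ y, ‖A y‖ ≤ M) (i : ℕ) (w : ℕ → ℕ) (x : ℝ) :
    Sfun lam 2 A x (cons i w) = A (tau 2 i x) + lam * Sfun lam 2 A (tau 2 i x) w := by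
  have hs := summable_term hlam0 hlam1 hM (cons i w) x
  rw [Sfun, hs.tsum_eq_zero_add]
  congr 1
  · simp [tpath]
    rfl
  · calc ∑' k : ℕ, lam ^ (k+1) * A (tpath 2 (cons i w) x (k+1))
        = ∑' k : ℕ, lam * (lam ^ k * A (tpath 2 w (tau 2 i x) k)) := by
          refine tsum_congr fun k => ?_
          rw [tpath_cons, pow_succ]; ring
      _ = lam * ∑' k : ℕ, lam ^ k * A (tpath 2 w (tau 2 i x) k) := tsum_mul_left
      _ = lam * Sfun lam 2 A (tau 2 i x) w := rfl

lemma Sdiff_strictMono {lam : ℝ} {A : ℝ → ℝ} (hlam0 : 0 ≤ lam) (hlam1 : lam < 1)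
    (hA : ContDiff ℝ 1 A) {M M' : ℝ} (hM : ∀ y, ‖A y‖ ≤ M) (hM' : ∀ y, ‖deriv A y‖ ≤ M')
    (htwist : Twist lam 2 A) {a b : ℕ → ℕ} (ha : ∀ k, a k < 2) (hb : ∀ k, b k < 2)
    (hab : lexLt a b) :
    StrictMonoOn (fun x => Sfun lam 2 A x a - Sfun lam 2 A x b) (Icc 0 1) := by
  apply strictMonoOn_of_deriv_pos (convex_Icc 0 1)
  · apply Continuous.continuousOn
    have hda : Differentiable ℝ (fun x => Sfun lam 2 A x a) :=
      fun x => (Sfun_hasDerivAt hlam0 hlam1 hA hM hM' a x).differentiableAt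
    have hdb : Differentiable ℝ (fun x => Sfun lam 2 A x b) :=
      fun x => (Sfun_hasDerivAt hlam0 hlam1 hA hM hM' b x).differentiableAt
    exact (hda.sub hdb).continuous
  · intro x hx
    rw [interior_Icc] at hx
    rw [deriv_fun_sub (Sfun_hasDerivAt hlam0 hlam1 hA hM hM' a x).differentiableAt
      (Sfun_hasDerivAt hlam0 hlam1 hA hM hM' b x).differentiableAt]
    exact htwist a b ha hb hab x hx

set_option maxHeartbeats 1000000 in
/-- period-3 characterization. The piecewise function built from
`S(·,(110)^∞)`, `S(·,(101)^∞)`, `S(·,(011)^∞)` on `[0,u]`, `[u,v]`, `[v,1]` satisfies the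
calibration equation iff `τ₁([0,u]) ⊆ [u,v]`, `τ₁([u,v]) ⊆ [v,1]` and `τ₀([v,1]) ⊆ [0,u]`. -/
theorem stmt13 (lam : ℝ) (hlam0 : 0 < lam) (hlam1 : lam < 1)
    (A : ℝ → ℝ) (hA : ContDiff ℝ 1 A) (hper : Function.Periodic A 1)
    (htwist : Twist lam 2 A)
    (h110 : IsGreatest {r : ℝ | ∃ a : ℕ → ℕ, (∀ k, a k < 2) ∧ r = Sfun lam 2 A (3/7) a}
      (Sfun lam 2 A (3/7) seq110))
    (h011 : IsGreatest {r : ℝ | ∃ a : ℕ → ℕ, (∀ k, a k < 2) ∧ r = Sfun lam 2 A (6/7) a}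
      (Sfun lam 2 A (6/7) seq011))
    (h101 : IsGreatest {r : ℝ | ∃ a : ℕ → ℕ, (∀ k, a k < 2) ∧ r = Sfun lam 2 A (5/7) a}
      (Sfun lam 2 A (5/7) seq101))
    (u : ℝ) (hu : u ∈ Icc (3/7 : ℝ) (5/7))
    (huS : Sfun lam 2 A u seq110 = Sfun lam 2 A u seq101)
    (v : ℝ) (hv : v ∈ Icc (5/7 : ℝ) (6/7))
    (hvS : Sfun lam 2 A v seq101 = Sfun lam 2 A v seq011)
    (b : ℝ → ℝ)
    (hbdef : ∀ x : ℝ, b x = if x ≤ u then Sfun lam 2 A x seq110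
      else if x ≤ v then Sfun lam 2 A x seq101 else Sfun lam 2 A x seq011) :
    (∀ x ∈ Icc (0:ℝ) 1,
        IsGreatest {r : ℝ | ∃ i < 2, r = lam * b (tau 2 i x) + A (tau 2 i x)} (b x)) ↔
      (tau 2 1 '' Icc 0 u ⊆ Icc u v ∧ tau 2 1 '' Icc u v ⊆ Icc v 1 ∧
        tau 2 0 '' Icc v 1 ⊆ Icc 0 u) := by
  have hlam0' : (0:ℝ) ≤ lam := hlam0.le
  obtain ⟨M, hM⟩ := bdd_of_periodic hA.continuous hper
  have hperd : Function.Periodic (deriv A) 1 := by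
    intro x
    have hfun : (fun y => A (y + 1)) = A := funext fun y => hper y
    calc deriv A (x + 1) = deriv (fun y => A (y + 1)) x := (deriv_comp_add_const A 1 x).symm
      _ = deriv A x := by rw [hfun]
  obtain ⟨M', hM'⟩ := bdd_of_periodic (hA.continuous_deriv le_rfl) hperd
  set fS := fun x => Sfun lam 2 A x seq110 with hfSd
  set gS := fun x => Sfun lam 2 A x seq101 with hgSd
  set hS := fun x => Sfun lam 2 A x seq011 with hhSd
  have hR1 : ∀ x : ℝ, fS x = A (tau 2 1 x) + lam * gS (tau 2 1 x) := by
    intro x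
    have h := Srec hlam0' hlam1 hM 1 seq101 x
    rw [cons1_101] at h
    exact h
  have hR2 : ∀ x : ℝ, gS x = A (tau 2 1 x) + lam * hS (tau 2 1 x) := by
    intro x
    have h := Srec hlam0' hlam1 hM 1 seq011 x
    rw [cons1_011] at h
    exact h
  have hR3 : ∀ x : ℝ, hS x = A (tau 2 0 x) + lam * fS (tau 2 0 x) := by
    intro x
    have h := Srec hlam0' hlam1 hM 0 seq110 x
    rw [cons0_110] at h
    exact h
  have mono_gf : StrictMonoOn (fun x => gS x - fS x) (Icc 0 1) :=
    Sdiff_strictMono hlam0' hlam1 hA hM hM' htwist adm101 adm110 lex_101_110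
  have mono_hg : StrictMonoOn (fun x => hS x - gS x) (Icc 0 1) :=
    Sdiff_strictMono hlam0' hlam1 hA hM hM' htwist adm011 adm101 lex_011_101
  have hu1 : (3:ℝ)/7 ≤ u := hu.1
  have hu2 : u ≤ 5/7 := hu.2
  have hv1 : (5:ℝ)/7 ≤ v := hv.1
  have hv2 : v ≤ 6/7 := hv.2
  have hu01 : u ∈ Icc (0:ℝ) 1 := ⟨by linarith, by linarith⟩
  have hv01 : v ∈ Icc (0:ℝ) 1 := ⟨by linarith, by linarith⟩
  have htau0 : ∀ y : ℝ, tau 2 0 y = y / 2 := fun y => by norm_num [tau]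
  have htau1 : ∀ y : ℝ, tau 2 1 y = (y + 1) / 2 := fun y => by norm_num [tau]
  have hK : v = (u + 1) / 2 := by
    have r1 := hR1 u
    have r2 := hR2 u
    rw [htau1 u] at r1 r2
    have e1 : gS ((u+1)/2) = hS ((u+1)/2) := by
      have h := le_antisymm
        (le_of_mul_le_mul_left (by linarith [huS] : lam * gS ((u+1)/2) ≤ lam * hS ((u+1)/2)) hlam0)
        (le_of_mul_le_mul_left (by linarith [huS] : lam * hS ((u+1)/2) ≤ lam * gS ((u+1)/2)) hlam0)
      exact h
    have hm1 : ((u+1)/2) ∈ Icc (0:ℝ) 1 := ⟨by linarith, by linarith⟩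
    exact mono_hg.injOn hv01 hm1 (by
      show hS v - gS v = hS ((u+1)/2) - gS ((u+1)/2)
      linarith [hvS, e1])
  have ord_fg : ∀ y, y ∈ Icc (0:ℝ) 1 → y ≤ u → gS y ≤ fS y := by
    intro y hy hyu
    have h := mono_gf.monotoneOn hy hu01 hyu
    linarith [huS]
  have ord_hg : ∀ y, y ∈ Icc (0:ℝ) 1 → y ≤ v → hS y ≤ gS y := by
    intro y hy hyv
    have h := mono_hg.monotoneOn hy hv01 hyv
    linarith [hvS]
  have ord_gh : ∀ y, y ∈ Icc (0:ℝ) 1 → v ≤ y → gS y ≤ hS y := by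
    intro y hy hyv
    have h := mono_hg.monotoneOn hv01 hy hyv
    linarith [hvS]
  have sord_fg : ∀ y, y ∈ Icc (0:ℝ) 1 → y < u → gS y < fS y := by
    intro y hy hyu
    have h := mono_gf hy hu01 hyu
    simp only at h
    linarith [huS]
  have sord_gf : ∀ y, y ∈ Icc (0:ℝ) 1 → u < y → fS y < gS y := by
    intro y hy hyu
    have h := mono_gf hu01 hy hyu
    simp only at h
    linarith [huS]
  have hb_f : ∀ y : ℝ, y ≤ u → b y = fS y := by
    intro y hy; rw [hbdef, if_pos hy]
  have hb_g : ∀ y : ℝ, u ≤ y → y ≤ v → b y = gS y := by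
    intro y h1 h2
    rcases eq_or_lt_of_le h1 with he | hlt
    · rw [hbdef, if_pos he.ge, ← he]
      exact huS
    · rw [hbdef, if_neg (not_le.mpr hlt), if_pos h2]
  have hb_h : ∀ y : ℝ, v < y → b y = hS y := by
    intro y hy
    rw [hbdef, if_neg (by push_neg; linarith), if_neg (not_le.mpr hy)]
  constructor
  · intro hcal
    have hu_half : u = 1/2 := by
      by_contra hne
      have hp01 : (u/2 + 1/4 : ℝ) ∈ Icc (0:ℝ) 1 := ⟨by linarith, by linarith⟩
      rcases lt_or_gt_of_ne hne with hlt | hgt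
      · have hx01 : (u + 1/2 : ℝ) ∈ Icc (0:ℝ) 1 := ⟨by linarith, by linarith⟩
        have hub := (hcal _ hx01).2 ⟨0, by norm_num, rfl⟩
        rw [htau0] at hub
        have e0 : (u + 1/2) / 2 = u/2 + 1/4 := by ring
        rw [e0] at hub
        have hbt : b (u/2+1/4) = gS (u/2+1/4) := hb_g _ (by linarith) (by linarith)
        have hbx : b (u + 1/2) = hS (u + 1/2) := hb_h _ (by rw [hK]; linarith)
        have r3 := hR3 (u + 1/2)
        rw [htau0, e0] at r3
        rw [hbt, hbx, r3] at hub
        have hfg : gS (u/2+1/4) ≤ fS (u/2+1/4) :=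
          le_of_mul_le_mul_left (by linarith) hlam0
        have h := sord_gf _ hp01 (by linarith : u < u/2+1/4)
        linarith
      · have hx01 : (u - 1/2 : ℝ) ∈ Icc (0:ℝ) 1 := ⟨by linarith, by linarith⟩
        have hub := (hcal _ hx01).2 ⟨1, by norm_num, rfl⟩
        rw [htau1] at hub
        have e0 : (u - 1/2 + 1) / 2 = u/2 + 1/4 := by ring
        rw [e0] at hub
        have hbt : b (u/2+1/4) = fS (u/2+1/4) := hb_f _ (by linarith)
        have hbx : b (u - 1/2) = fS (u - 1/2) := hb_f _ (by linarith)
        have r1 := hR1 (u - 1/2)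
        rw [htau1, e0] at r1
        rw [hbt, hbx, r1] at hub
        have hfg : fS (u/2+1/4) ≤ gS (u/2+1/4) :=
          le_of_mul_le_mul_left (by linarith) hlam0
        have h := sord_fg _ hp01 (by linarith : u/2+1/4 < u)
        linarith
    have hv34 : v = 3/4 := by rw [hK, hu_half]; norm_num
    refine ⟨?_, ?_, ?_⟩
    · rintro y ⟨z, hz, rfl⟩
      obtain ⟨hz1, hz2⟩ := hz
      rw [htau1, Set.mem_Icc]
      constructor <;> linarith
    · rintro y ⟨z, hz, rfl⟩
      obtain ⟨hz1, hz2⟩ := hz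
      rw [htau1, Set.mem_Icc]
      constructor <;> linarith
    · rintro y ⟨z, hz, rfl⟩
      obtain ⟨hz1, hz2⟩ := hz
      rw [htau0, Set.mem_Icc]
      constructor <;> linarith
  · rintro ⟨hi1, hi2, hi3⟩
    have hu_half : u = 1/2 := by
      have h1 : tau 2 1 0 ∈ Icc u v := hi1 ⟨0, ⟨le_refl 0, by linarith⟩, rfl⟩
      have h2 : tau 2 0 1 ∈ Icc 0 u := hi3 ⟨1, ⟨by linarith, le_refl 1⟩, rfl⟩
      rw [htau1, Set.mem_Icc] at h1
      rw [htau0, Set.mem_Icc] at h2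
      have := h1.1
      have := h2.2
      norm_num at *
      linarith
    have hv34 : v = 3/4 := by rw [hK, hu_half]; norm_num
    intro x hx
    obtain ⟨hx0, hx1⟩ := hx
    have hx01 : x ∈ Icc (0:ℝ) 1 := ⟨hx0, hx1⟩
    constructor
    · rcases le_or_gt x u with hxu | hxu
      · refine ⟨1, by norm_num, ?_⟩
        rw [htau1, hb_f x hxu, hb_g ((x+1)/2) (by linarith) (by linarith)]
        have r1 := hR1 x; rw [htau1] at r1
        linarith
      · rcases le_or_gt x v with hxv | hxv
        · refine ⟨1, by norm_num, ?_⟩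
          rw [htau1, hb_g x hxu.le hxv, hb_h ((x+1)/2) (by linarith)]
          have r2 := hR2 x; rw [htau1] at r2
          linarith
        · refine ⟨0, by norm_num, ?_⟩
          rw [htau0, hb_h x hxv, hb_f (x/2) (by linarith)]
          have r3 := hR3 x; rw [htau0] at r3
          linarith
    · rintro r ⟨i, hi, rfl⟩
      interval_cases i
      · rw [htau0, hb_f (x/2) (by linarith)]
        have r3 := hR3 x; rw [htau0] at r3
        rcases le_or_gt x u with hxu | hxu
        · rw [hb_f x hxu]
          have o1 := ord_hg x hx01 (by linarith : x ≤ v)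
          have o2 := ord_fg x hx01 hxu
          linarith
        · rcases le_or_gt x v with hxv | hxv
          · rw [hb_g x hxu.le hxv]
            have o1 := ord_hg x hx01 hxv
            linarith
          · rw [hb_h x hxv]
            linarith
      · rw [htau1]
        rcases le_or_gt x u with hxu | hxu
        · rw [hb_g ((x+1)/2) (by linarith) (by linarith), hb_f x hxu]
          have r1 := hR1 x; rw [htau1] at r1
          linarith
        · rw [hb_h ((x+1)/2) (by linarith)]
          have r2 := hR2 x; rw [htau1] at r2
          rcases le_or_gt x v with hxv | hxv
          · rw [hb_g x hxu.le hxv]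
            linarith
          · rw [hb_h x hxv]
            have o := ord_gh x hx01 hxv.le
            linarith

end
end

section
/- Let 0<λ<1, d=2, and let A(x)=c₀+c₁x+c₂x² be a quadratic polynomial. Then for every a∈Σ and every x∈(0,1), the function x↦S(x,a) is differentiable with ∂S/∂x(x,a) = c₁/(2−λ) + (2c₂/(4−λ))·x + (2c₂/(4−λ))·Z(a). Moreover, A satisfies the twist condition (for all a<b lexicographically and all x, ∂S/∂x(x,a)−∂S/∂x(x,b)>0) if and only if c₂<0. -/
open Set

noncomputable section

/- ===================== auxiliary lemmas ===================== -/

lemma psi_zero' (a : ℕ → ℕ) : psi a 0 = (a 0 : ℝ) / 2 := by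
  simp [psi]
  norm_num
  ring

lemma psi_succ' (a : ℕ → ℕ) (k : ℕ) :
    psi a (k + 1) = (psi a k + (a (k + 1) : ℝ)) / 2 := by
  unfold psi
  rw [Finset.sum_range_succ, add_div, Finset.sum_div]
  have h2 : (2 : ℝ) ≠ 0 := by norm_num
  congr 1
  · refine Finset.sum_congr rfl fun j hj => ?_
    rw [div_eq_mul_inv, mul_assoc, ← zpow_neg_one, ← zpow_add₀ h2]
    congr 1
    push_cast
    ring
  · rw [div_eq_mul_inv, ← zpow_neg_one]
    congr 1
    push_cast
    ring
    norm_num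

lemma tpath_eq' (a : ℕ → ℕ) (x : ℝ) (k : ℕ) :
    tpath 2 a x k = x / 2 ^ (k + 1) + psi a k := by
  induction k with
  | zero => rw [psi_zero']; simp [tpath, tau]; ring
  | succ k ih =>
    show tau 2 (a (k + 1)) (tpath 2 a x k) = _
    rw [tau, ih, psi_succ']
    push_cast
    ring

lemma psi_nonneg' (a : ℕ → ℕ) (k : ℕ) : 0 ≤ psi a k := by
  induction k with
  | zero => rw [psi_zero']; positivity
  | succ k ih =>
    rw [psi_succ']
    have : (0 : ℝ) ≤ (a (k + 1) : ℝ) := Nat.cast_nonneg _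
    linarith

lemma psi_le_one' (a : ℕ → ℕ) (ha : ∀ k, a k < 2) (k : ℕ) : psi a k ≤ 1 := by
  induction k with
  | zero =>
    rw [psi_zero']
    have : (a 0 : ℝ) ≤ 1 := by exact_mod_cast Nat.lt_succ_iff.mp (ha 0)
    linarith
  | succ k ih =>
    rw [psi_succ']
    have : (a (k + 1) : ℝ) ≤ 1 := by exact_mod_cast Nat.lt_succ_iff.mp (ha (k + 1))
    linarith

lemma summable_geom_mul (lam : ℝ) (hlam0 : 0 < lam) (hlam1 : lam < 1)
    (g : ℕ → ℝ) (hg0 : ∀ k, 0 ≤ g k) (hg1 : ∀ k, g k ≤ 1) :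
    Summable (fun k : ℕ => (lam / 2) ^ k * g k) := by
  have hq0 : (0 : ℝ) ≤ lam / 2 := by linarith
  have hq1 : lam / 2 < 1 := by linarith
  refine Summable.of_nonneg_of_le (fun k => ?_) (fun k => ?_)
    (summable_geometric_of_lt_one hq0 hq1)
  · exact mul_nonneg (pow_nonneg hq0 k) (hg0 k)
  · exact mul_le_of_le_one_right (pow_nonneg hq0 k) (hg1 k)

lemma Zfun_summable (lam : ℝ) (hlam0 : 0 < lam) (hlam1 : lam < 1)
    (a : ℕ → ℕ) (ha : ∀ k, a k < 2) :
    Summable (fun k : ℕ => (lam / 2) ^ k * (a k : ℝ)) :=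
  summable_geom_mul lam hlam0 hlam1 _ (fun k => Nat.cast_nonneg _)
    (fun k => by exact_mod_cast Nat.lt_succ_iff.mp (ha k))

lemma psi_tsum_summable (lam : ℝ) (hlam0 : 0 < lam) (hlam1 : lam < 1)
    (a : ℕ → ℕ) (ha : ∀ k, a k < 2) :
    Summable (fun k : ℕ => (lam / 2) ^ k * psi a k) :=
  summable_geom_mul lam hlam0 hlam1 _ (psi_nonneg' a) (psi_le_one' a ha)

lemma F_eq (lam : ℝ) (hlam0 : 0 < lam) (hlam1 : lam < 1)
    (a : ℕ → ℕ) (ha : ∀ k, a k < 2) :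
    ∑' k : ℕ, (lam / 2) ^ k * psi a k = 2 * Zfun lam a / (4 - lam) := by
  have h4l : (0 : ℝ) < 4 - lam := by linarith
  have sF := psi_tsum_summable lam hlam0 hlam1 a ha
  have sZ := Zfun_summable lam hlam0 hlam1 a ha
  have sSh : Summable (fun k : ℕ => (lam / 2) ^ k * (a (k + 1) : ℝ)) :=
    summable_geom_mul lam hlam0 hlam1 _ (fun k => Nat.cast_nonneg _)
      (fun k => by exact_mod_cast Nat.lt_succ_iff.mp (ha (k + 1)))
  set F := ∑' k : ℕ, (lam / 2) ^ k * psi a k with hFdef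
  set Sh := ∑' k : ℕ, (lam / 2) ^ k * (a (k + 1) : ℝ) with hShdef
  set Z := Zfun lam a with hZdef
  -- recursion for F
  have hF : F = (a 0 : ℝ) / 2 + (lam / 4) * F + (lam / 4) * Sh := by
    have h0 := sF.tsum_eq_zero_add
    have hterm : ∀ k : ℕ, (lam / 2) ^ (k + 1) * psi a (k + 1)
        = (lam / 4) * ((lam / 2) ^ k * psi a k)
          + (lam / 4) * ((lam / 2) ^ k * (a (k + 1) : ℝ)) := by
      intro k
      rw [psi_succ']
      ring
    calc F = (lam / 2) ^ 0 * psi a 0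
        + ∑' k : ℕ, (lam / 2) ^ (k + 1) * psi a (k + 1) := h0
      _ = (a 0 : ℝ) / 2 + ∑' k : ℕ, ((lam / 4) * ((lam / 2) ^ k * psi a k)
          + (lam / 4) * ((lam / 2) ^ k * (a (k + 1) : ℝ))) := by
          rw [psi_zero', tsum_congr hterm]; ring_nf
      _ = (a 0 : ℝ) / 2 + ((lam / 4) * F + (lam / 4) * Sh) := by
          rw [Summable.tsum_add (sF.mul_left _) (sSh.mul_left _), tsum_mul_left, tsum_mul_left]
      _ = (a 0 : ℝ) / 2 + (lam / 4) * F + (lam / 4) * Sh := by ring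
  -- recursion for Z
  have hZ : Z = (a 0 : ℝ) + (lam / 2) * Sh := by
    have h0 := sZ.tsum_eq_zero_add
    calc Z = (lam / 2) ^ 0 * (a 0 : ℝ)
        + ∑' k : ℕ, (lam / 2) ^ (k + 1) * (a (k + 1) : ℝ) := h0
      _ = (a 0 : ℝ) + ∑' k : ℕ, (lam / 2) * ((lam / 2) ^ k * (a (k + 1) : ℝ)) := by
          rw [tsum_congr (fun k => by ring : ∀ k : ℕ,
            (lam / 2) ^ (k + 1) * (a (k + 1) : ℝ)
              = (lam / 2) * ((lam / 2) ^ k * (a (k + 1) : ℝ)))]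
          ring_nf
      _ = (a 0 : ℝ) + (lam / 2) * Sh := by rw [tsum_mul_left]
  rw [eq_div_iff (ne_of_gt h4l)]
  linarith

lemma Sfun_eq (lam : ℝ) (hlam0 : 0 < lam) (hlam1 : lam < 1) (c₀ c₁ c₂ : ℝ)
    (A : ℝ → ℝ) (hA : ∀ x, A x = c₀ + c₁ * x + c₂ * x ^ 2)
    (a : ℕ → ℕ) (ha : ∀ k, a k < 2) (x : ℝ) :
    Sfun lam 2 A x a =
      (∑' k : ℕ, lam ^ k * (c₀ + c₁ * psi a k + c₂ * (psi a k) ^ 2))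
      + (c₁ / (2 - lam) + 2 * c₂ / (4 - lam) * Zfun lam a) * x
      + (c₂ / (4 - lam)) * x ^ 2 := by
  have hl0 : (0 : ℝ) ≤ lam := le_of_lt hlam0
  have h2l : (0 : ℝ) < 2 - lam := by linarith
  have h4l : (0 : ℝ) < 4 - lam := by linarith
  have hq0 : (0 : ℝ) ≤ lam / 2 := by linarith
  have hq1 : lam / 2 < 1 := by linarith
  have hr0 : (0 : ℝ) ≤ lam / 4 := by linarith
  have hr1 : lam / 4 < 1 := by linarith
  have sgl : Summable (fun k : ℕ => lam ^ k) := summable_geometric_of_lt_one hl0 hlam1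
  have sgq : Summable (fun k : ℕ => (lam / 2) ^ k) := summable_geometric_of_lt_one hq0 hq1
  have sgr : Summable (fun k : ℕ => (lam / 4) ^ k) := summable_geometric_of_lt_one hr0 hr1
  have sF := psi_tsum_summable lam hlam0 hlam1 a ha
  -- summability of the constant part
  have sU : Summable (fun k : ℕ => lam ^ k * (c₀ + c₁ * psi a k + c₂ * (psi a k) ^ 2)) := by
    refine Summable.of_norm_bounded (sgl.mul_left (|c₀| + |c₁| + |c₂|)) fun k => ?_
    have hψa : |psi a k| ≤ 1 := abs_le.mpr ⟨by linarith [psi_nonneg' a k], psi_le_one' a ha k⟩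
    have h1 : |c₀ + c₁ * psi a k + c₂ * (psi a k) ^ 2| ≤ |c₀| + |c₁| + |c₂| := by
      have e1 : |c₁ * psi a k| ≤ |c₁| := by
        rw [abs_mul]; exact mul_le_of_le_one_right (abs_nonneg _) hψa
      have e2 : |c₂ * (psi a k) ^ 2| ≤ |c₂| := by
        rw [abs_mul, abs_pow]
        have : |psi a k| ^ 2 ≤ 1 := by nlinarith [abs_nonneg (psi a k)]
        exact mul_le_of_le_one_right (abs_nonneg _) this
      calc |c₀ + c₁ * psi a k + c₂ * (psi a k) ^ 2|
          ≤ |c₀ + c₁ * psi a k| + |c₂ * (psi a k) ^ 2| := abs_add_le _ _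
        _ ≤ |c₀| + |c₁ * psi a k| + |c₂ * (psi a k) ^ 2| := by
            linarith [abs_add_le c₀ (c₁ * psi a k)]
        _ ≤ |c₀| + |c₁| + |c₂| := by linarith
    rw [Real.norm_eq_abs, abs_mul, abs_pow, abs_of_nonneg hl0,
      mul_comm (|c₀| + |c₁| + |c₂|) (lam ^ k)]
    exact mul_le_mul_of_nonneg_left h1 (pow_nonneg hl0 k)
  have sV : Summable (fun k : ℕ =>
      (c₁ / 2 * (lam / 2) ^ k + c₂ * ((lam / 2) ^ k * psi a k)) * x) :=
    ((sgq.mul_left (c₁ / 2)).add (sF.mul_left c₂)).mul_right x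
  have sW : Summable (fun k : ℕ => c₂ / 4 * (lam / 4) ^ k * x ^ 2) :=
    (sgr.mul_left (c₂ / 4)).mul_right (x ^ 2)
  have key : ∀ k : ℕ, lam ^ k * A (tpath 2 a x k)
      = lam ^ k * (c₀ + c₁ * psi a k + c₂ * (psi a k) ^ 2)
        + (c₁ / 2 * (lam / 2) ^ k + c₂ * ((lam / 2) ^ k * psi a k)) * x
        + c₂ / 4 * (lam / 4) ^ k * x ^ 2 := by
    intro k
    rw [hA, tpath_eq' a x k]
    have h2k : ((2 : ℝ) ^ k) ≠ 0 := by positivity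
    have e1 : (lam / 2) ^ k = lam ^ k / 2 ^ k := div_pow lam 2 k
    have e2 : (lam / 4) ^ k = lam ^ k / 4 ^ k := div_pow lam 4 k
    have e3 : (4 : ℝ) ^ k = 2 ^ k * 2 ^ k := by
      rw [← mul_pow]; norm_num
    have e4 : (2 : ℝ) ^ (k + 1) = 2 ^ k * 2 := by rw [pow_succ]
    rw [e1, e2, e3, e4]
    field_simp
    ring
  rw [Sfun, tsum_congr key, Summable.tsum_add (sU.add sV) sW, Summable.tsum_add sU sV]
  have h2ne : (2 : ℝ) - lam ≠ 0 := ne_of_gt h2l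
  have h4ne : (4 : ℝ) - lam ≠ 0 := ne_of_gt h4l
  have hV : (∑' k : ℕ, (c₁ / 2 * (lam / 2) ^ k + c₂ * ((lam / 2) ^ k * psi a k)) * x)
      = (c₁ / (2 - lam) + 2 * c₂ / (4 - lam) * Zfun lam a) * x := by
    rw [tsum_mul_right, Summable.tsum_add (sgq.mul_left (c₁ / 2)) (sF.mul_left c₂),
      tsum_mul_left, tsum_mul_left, tsum_geometric_of_lt_one hq0 hq1,
      F_eq lam hlam0 hlam1 a ha]
    have e : c₁ / 2 * (1 - lam / 2)⁻¹ + c₂ * (2 * Zfun lam a / (4 - lam))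
        = c₁ / (2 - lam) + 2 * c₂ / (4 - lam) * Zfun lam a := by
      have hh : (1 : ℝ) - lam / 2 ≠ 0 := by
        intro h; apply h2ne; linarith
      have h1 : (1 - lam / 2)⁻¹ = 2 / (2 - lam) := by
        rw [eq_div_iff h2ne]
        field_simp
      rw [h1]
      ring
    rw [e]
  have hW : (∑' k : ℕ, c₂ / 4 * (lam / 4) ^ k * x ^ 2) = c₂ / (4 - lam) * x ^ 2 := by
    rw [tsum_mul_right, tsum_mul_left, tsum_geometric_of_lt_one hr0 hr1]
    have e : c₂ / 4 * (1 - lam / 4)⁻¹ = c₂ / (4 - lam) := by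
      have hh : (1 : ℝ) - lam / 4 ≠ 0 := by
        intro h; apply h4ne; linarith
      have h1 : (1 - lam / 4)⁻¹ = 4 / (4 - lam) := by
        rw [eq_div_iff h4ne]
        field_simp
      rw [h1]
      ring
    rw [e]
  rw [hV, hW]

lemma Z_lt (lam : ℝ) (hlam0 : 0 < lam) (hlam1 : lam < 1)
    (a b : ℕ → ℕ) (ha : ∀ k, a k < 2) (hb : ∀ k, b k < 2)
    (hab : lexLt a b) : Zfun lam a < Zfun lam b := by
  have hq0 : (0 : ℝ) ≤ lam / 2 := by linarith
  have hq1 : lam / 2 < 1 := by linarith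
  have h1q : (0 : ℝ) < 1 - lam / 2 := by linarith
  obtain ⟨n, hpre, hn⟩ := hab
  have sZa := Zfun_summable lam hlam0 hlam1 a ha
  have sZb := Zfun_summable lam hlam0 hlam1 b hb
  set f : ℕ → ℝ := fun k => (lam / 2) ^ k * ((b k : ℝ) - (a k : ℝ)) with hfdef
  have sf : Summable f := by
    have := sZb.sub sZa
    simpa [hfdef, mul_sub] using this
  have hsub : Zfun lam b - Zfun lam a = ∑' k, f k := by
    rw [Zfun, Zfun, ← Summable.tsum_sub sZb sZa]
    exact tsum_congr fun k => by rw [hfdef]; ring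
  have hsplit := Summable.sum_add_tsum_nat_add (n + 1) sf
  -- head sum
  have hhead : ∑ i ∈ Finset.range (n + 1), f i = f n := by
    refine Finset.sum_eq_single_of_mem n (Finset.self_mem_range_succ n) fun i hi hne => ?_
    have hin : i < n := lt_of_le_of_ne (Nat.lt_succ_iff.mp (Finset.mem_range.mp hi)) hne
    have : a i = b i := hpre i hin
    simp [hfdef, this]
  have hfn : (lam / 2) ^ n ≤ f n := by
    have h1 : (1 : ℝ) ≤ (b n : ℝ) - (a n : ℝ) := by
      have : a n + 1 ≤ b n := hn
      have := (Nat.cast_le (α := ℝ)).mpr this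
      push_cast at this
      linarith
    have hp : (0 : ℝ) ≤ (lam / 2) ^ n := pow_nonneg hq0 n
    show (lam / 2) ^ n ≤ (lam / 2) ^ n * ((b n : ℝ) - (a n : ℝ))
    nlinarith [mul_nonneg hp (by linarith : (0 : ℝ) ≤ (b n : ℝ) - (a n : ℝ) - 1)]
  -- tail bound
  have htail : -((lam / 2) ^ (n + 1) * (1 - lam / 2)⁻¹) ≤ ∑' i, f (i + (n + 1)) := by
    have hterm : ∀ i : ℕ, -((lam / 2) ^ (n + 1) * (lam / 2) ^ i) ≤ f (i + (n + 1)) := by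
      intro i
      have hbi : (0 : ℝ) ≤ (b (i + (n + 1)) : ℝ) := Nat.cast_nonneg _
      have hai : (a (i + (n + 1)) : ℝ) ≤ 1 := by
        exact_mod_cast Nat.lt_succ_iff.mp (ha (i + (n + 1)))
      have hge : (-1 : ℝ) ≤ (b (i + (n + 1)) : ℝ) - (a (i + (n + 1)) : ℝ) := by linarith
      have hp : (0 : ℝ) ≤ (lam / 2) ^ (i + (n + 1)) := pow_nonneg hq0 _
      have := mul_le_mul_of_nonneg_left hge hp
      calc -((lam / 2) ^ (n + 1) * (lam / 2) ^ i)
          = (lam / 2) ^ (i + (n + 1)) * (-1) := by rw [pow_add]; ring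
        _ ≤ f (i + (n + 1)) := this
    have sneg : Summable (fun i : ℕ => -((lam / 2) ^ (n + 1) * (lam / 2) ^ i)) :=
      (((summable_geometric_of_lt_one hq0 hq1).mul_left ((lam / 2) ^ (n + 1)))).neg
    have stail : Summable (fun i : ℕ => f (i + (n + 1))) :=
      (summable_nat_add_iff (n + 1)).mpr sf
    have := Summable.tsum_le_tsum hterm sneg stail
    calc -((lam / 2) ^ (n + 1) * (1 - lam / 2)⁻¹)
        = ∑' i : ℕ, -((lam / 2) ^ (n + 1) * (lam / 2) ^ i) := by
          rw [tsum_neg, tsum_mul_left, tsum_geometric_of_lt_one hq0 hq1]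
      _ ≤ ∑' i, f (i + (n + 1)) := this
  -- combine
  have hkey : 0 < (lam / 2) ^ n - (lam / 2) ^ (n + 1) * (1 - lam / 2)⁻¹ := by
    have hpn : (0 : ℝ) < (lam / 2) ^ n := pow_pos (by linarith) n
    have hinv : (1 - lam / 2)⁻¹ ≤ 2 := by
      rw [inv_le_comm₀ h1q (by norm_num)]
      linarith
    have hinv0 : (0 : ℝ) < (1 - lam / 2)⁻¹ := inv_pos.mpr h1q
    have : (lam / 2) ^ (n + 1) * (1 - lam / 2)⁻¹ ≤ (lam / 2) ^ n * (lam / 2) * 2 := by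
      rw [pow_succ]
      have h0 : (0 : ℝ) ≤ (lam / 2) ^ n * (lam / 2) := by positivity
      exact mul_le_mul_of_nonneg_left hinv h0
    nlinarith
  have : 0 < Zfun lam b - Zfun lam a := by
    rw [hsub, ← hsplit, hhead]
    nlinarith
  linarith

/-- for quadratic `A(x) = c₀ + c₁x + c₂x²`,
`∂S/∂x(x,a) = c₁/(2−λ) + (2c₂/(4−λ))x + (2c₂/(4−λ))Z(a)`, and `A` is twist iff `c₂ < 0`. -/
theorem stmt17 (lam : ℝ) (hlam0 : 0 < lam) (hlam1 : lam < 1) (c₀ c₁ c₂ : ℝ)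
    (A : ℝ → ℝ) (hA : ∀ x, A x = c₀ + c₁ * x + c₂ * x ^ 2) :
    (∀ a : ℕ → ℕ, (∀ k, a k < 2) → ∀ x ∈ Ioo (0:ℝ) 1,
      HasDerivAt (fun y => Sfun lam 2 A y a)
        (c₁ / (2 - lam) + (2 * c₂ / (4 - lam)) * x + (2 * c₂ / (4 - lam)) * Zfun lam a) x) ∧
    (Twist lam 2 A ↔ c₂ < 0) := by
  have h2l : (0 : ℝ) < 2 - lam := by linarith
  have h4l : (0 : ℝ) < 4 - lam := by linarith
  have hder : ∀ a : ℕ → ℕ, (∀ k, a k < 2) → ∀ x : ℝ,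
      HasDerivAt (fun y => Sfun lam 2 A y a)
        (c₁ / (2 - lam) + (2 * c₂ / (4 - lam)) * x + (2 * c₂ / (4 - lam)) * Zfun lam a) x := by
    intro a ha x
    have hfun : (fun y => Sfun lam 2 A y a)
        = fun y => (∑' k : ℕ, lam ^ k * (c₀ + c₁ * psi a k + c₂ * (psi a k) ^ 2))
          + ((c₁ / (2 - lam) + 2 * c₂ / (4 - lam) * Zfun lam a) * y
          + (c₂ / (4 - lam)) * y ^ 2) :=
      funext fun y => (Sfun_eq lam hlam0 hlam1 c₀ c₁ c₂ A hA a ha y).trans (by ring)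
    rw [hfun]
    have h1 : HasDerivAt
        (fun y : ℝ => (c₁ / (2 - lam) + 2 * c₂ / (4 - lam) * Zfun lam a) * y)
        (c₁ / (2 - lam) + 2 * c₂ / (4 - lam) * Zfun lam a) x := by
      simpa using (hasDerivAt_id x).const_mul
        (c₁ / (2 - lam) + 2 * c₂ / (4 - lam) * Zfun lam a)
    have h2 : HasDerivAt (fun y : ℝ => (c₂ / (4 - lam)) * y ^ 2)
        ((c₂ / (4 - lam)) * (2 * x)) x := by
      have := (hasDerivAt_pow 2 x).const_mul (c₂ / (4 - lam))
      simpa using this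
    have h3 := (h1.add h2).const_add
      (∑' k : ℕ, lam ^ k * (c₀ + c₁ * psi a k + c₂ * (psi a k) ^ 2))
    refine h3.congr_deriv ?_
    ring
  constructor
  · intro a ha x _
    exact hder a ha x
  constructor
  · -- Twist → c₂ < 0
    intro htw
    set a : ℕ → ℕ := fun _ => 0 with hadef
    set b : ℕ → ℕ := cons 1 (fun _ => 0) with hbdef
    have ha2 : ∀ k, a k < 2 := fun k => by norm_num [hadef]
    have hb2 : ∀ k, b k < 2 := by
      intro k
      cases k with
      | zero => norm_num [hbdef, cons]
      | succ m => norm_num [hbdef, cons]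
    have hab : lexLt a b := by
      refine ⟨0, fun i hi => absurd hi (Nat.not_lt_zero i), ?_⟩
      norm_num [hadef, hbdef, cons]
    have hZa : Zfun lam a = 0 := by
      simp [Zfun, hadef]
    have hZb : Zfun lam b = 1 := by
      rw [Zfun]
      rw [tsum_eq_single 0 (fun k hk => by
        cases k with
        | zero => exact absurd rfl hk
        | succ m => simp [hbdef, cons])]
      simp [hbdef, cons]
    have hx : (1 / 2 : ℝ) ∈ Ioo (0 : ℝ) 1 := by norm_num
    have := htw a b ha2 hb2 hab (1 / 2) hx
    rw [(hder a ha2 (1 / 2)).deriv, (hder b hb2 (1 / 2)).deriv, hZa, hZb] at this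
    have hK : 2 * c₂ / (4 - lam) < 0 := by linarith
    rcases div_neg_iff.mp hK with ⟨h1, _⟩ | ⟨_, h2⟩
    · linarith
    · linarith
  · -- c₂ < 0 → Twist
    intro hc₂
    intro a b ha2 hb2 hab x hx
    rw [(hder a ha2 x).deriv, (hder b hb2 x).deriv]
    have hZ : Zfun lam a < Zfun lam b := Z_lt lam hlam0 hlam1 a b ha2 hb2 hab
    have hK : 2 * c₂ / (4 - lam) < 0 := div_neg_of_neg_of_pos (by linarith) h4l
    have hprod : 0 < (2 * c₂ / (4 - lam)) * (Zfun lam a - Zfun lam b) :=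
      mul_pos_of_neg_of_neg hK (by linarith)
    nlinarith

end
end
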